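/- The function f(β,μ) = log(1/(μ+β) + 1/(μ-β)), defined on the open cone A = {(β,μ) : μ > 0, |β| < μ}, is strictly convex on A. -/

import Mathlib

open Real Set

private lemma hasDerivAt_log_affine (c d t : ℝ) (h : c + t * d ≠ 0) :
    HasDerivAt (fun s => Real.log (c + s * d)) (d / (c + t * d)) t := by
  have h1 : HasDerivAt (fun s : ℝ => c + s * d) d t := by
    simpa using ((hasDerivAt_id t).mul_const d).const_add c
  rw [div_eq_inv_mul]
  exact (Real.hasDerivAt_log h).comp t h1

private lemma hasDerivAt_div_affine (c d t : ℝ) (h : c + t * d ≠ 0) :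
    HasDerivAt (fun s => d / (c + s * d)) (-(d ^ 2 / (c + t * d) ^ 2)) t := by
  have h1 : HasDerivAt (fun s : ℝ => c + s * d) d t := by
    simpa using ((hasDerivAt_id t).mul_const d).const_add c
  have h2 := (h1.inv h).const_mul d
  have h3 : (fun s : ℝ => d / (c + s * d)) = fun s : ℝ => d * (c + s * d)⁻¹ := by
    funext s; rw [div_eq_mul_inv]
  rw [h3]
  exact h2.congr_deriv (by ring)

private lemma logform (v w : ℝ) (hv : 0 < v) (hw : 0 < w) :
    Real.log (1 / v + 1 / w) = Real.log (v + w) - Real.log v - Real.log w := by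
  have h1 : 1 / v + 1 / w = (v + w) / (v * w) := by field_simp; ring
  rw [h1, Real.log_div (by positivity) (by positivity), Real.log_mul hv.ne' hw.ne']
  ring

private lemma seg_strictConvex (v0 w0 dv dw : ℝ)
    (hvt : ∀ t ∈ Icc (0:ℝ) 1, 0 < v0 + t * dv)
    (hwt : ∀ t ∈ Icc (0:ℝ) 1, 0 < w0 + t * dw)
    (hne : 0 < dv ^ 2 + dw ^ 2) :
    StrictConvexOn ℝ (Icc (0:ℝ) 1) (fun t =>
      Real.log ((v0 + w0) + t * (dv + dw)) - Real.log (v0 + t * dv)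
        - Real.log (w0 + t * dw)) := by
  have hVt : ∀ t ∈ Icc (0:ℝ) 1, 0 < (v0 + w0) + t * (dv + dw) := by
    intro t ht
    have := hvt t ht; have := hwt t ht; linarith
  set ψ' : ℝ → ℝ := fun t =>
    (dv + dw) / ((v0 + w0) + t * (dv + dw)) - dv / (v0 + t * dv) - dw / (w0 + t * dw)
    with hψ'def
  have hderiv1 : ∀ t ∈ Ioo (0:ℝ) 1, HasDerivAt (fun t =>
      Real.log ((v0 + w0) + t * (dv + dw)) - Real.log (v0 + t * dv)
        - Real.log (w0 + t * dw)) (ψ' t) t := by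
    intro t ht
    have h1 := hasDerivAt_log_affine (v0 + w0) (dv + dw) t (hVt t (Ioo_subset_Icc_self ht)).ne'
    have h2 := hasDerivAt_log_affine v0 dv t (hvt t (Ioo_subset_Icc_self ht)).ne'
    have h3 := hasDerivAt_log_affine w0 dw t (hwt t (Ioo_subset_Icc_self ht)).ne'
    exact (h1.sub h2).sub h3
  apply strictConvexOn_of_deriv2_pos (convex_Icc 0 1)
  · apply ContinuousOn.sub
    apply ContinuousOn.sub
    · exact ContinuousOn.log (by fun_prop) fun t ht => (hVt t ht).ne'
    · exact ContinuousOn.log (by fun_prop) fun t ht => (hvt t ht).ne'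
    · exact ContinuousOn.log (by fun_prop) fun t ht => (hwt t ht).ne'
  · intro t ht
    rw [interior_Icc] at ht
    have hv := hvt t (Ioo_subset_Icc_self ht)
    have hw := hwt t (Ioo_subset_Icc_self ht)
    have hV := hVt t (Ioo_subset_Icc_self ht)
    have heq : ∀ s ∈ Ioo (0:ℝ) 1, deriv (fun t =>
        Real.log ((v0 + w0) + t * (dv + dw)) - Real.log (v0 + t * dv)
          - Real.log (w0 + t * dw)) s = ψ' s := fun s hs => (hderiv1 s hs).deriv
    have hev : deriv (fun t =>
        Real.log ((v0 + w0) + t * (dv + dw)) - Real.log (v0 + t * dv)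
          - Real.log (w0 + t * dw)) =ᶠ[nhds t] ψ' :=
      Filter.eventuallyEq_of_mem (isOpen_Ioo.mem_nhds ht) heq
    have hψ'' : HasDerivAt ψ'
        (dv ^ 2 / (v0 + t * dv) ^ 2 + dw ^ 2 / (w0 + t * dw) ^ 2
          - (dv + dw) ^ 2 / ((v0 + w0) + t * (dv + dw)) ^ 2) t := by
      have h1 := hasDerivAt_div_affine (v0 + w0) (dv + dw) t hV.ne'
      have h2 := hasDerivAt_div_affine v0 dv t hv.ne'
      have h3 := hasDerivAt_div_affine w0 dw t hw.ne'
      have := (h1.sub h2).sub h3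
      exact this.congr_deriv (by ring)
    have hit : deriv^[2] (fun t =>
        Real.log ((v0 + w0) + t * (dv + dw)) - Real.log (v0 + t * dv)
          - Real.log (w0 + t * dw)) t = deriv ψ' t := by
      simp only [Function.iterate_succ, Function.iterate_zero, Function.comp_apply, id]
      exact hev.deriv_eq
    rw [hit, hψ''.deriv]
    -- positivity of the second derivative
    generalize hvdef : v0 + t * dv = v at *
    generalize hwdef : w0 + t * dw = w at *
    have hVvw : (v0 + w0) + t * (dv + dw) = v + w := by rw [← hvdef, ← hwdef]; ring
    rw [hVvw]
    have key : (dv + dw) ^ 2 * (v ^ 2 * w ^ 2) + (dv * w ^ 2 - dw * v ^ 2) ^ 2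
        + 2 * v * w * (dv ^ 2 * w ^ 2 + dw ^ 2 * v ^ 2)
        = (dv ^ 2 * w ^ 2 + dw ^ 2 * v ^ 2) * (v + w) ^ 2 := by ring
    have hq : 0 < dv ^ 2 * w ^ 2 + dw ^ 2 * v ^ 2 := by
      rcases eq_or_ne dv 0 with h | h
      · have hdw : dw ≠ 0 := by
          intro h2; rw [h, h2] at hne; norm_num at hne
        have hx : 0 < dw ^ 2 * v ^ 2 := by positivity
        nlinarith [sq_nonneg (dv * w)]
      · have hx : 0 < dv ^ 2 * w ^ 2 := by positivity
        nlinarith [sq_nonneg (dw * v)]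
    have hpos1 : 0 ≤ (dv * w ^ 2 - dw * v ^ 2) ^ 2 := sq_nonneg _
    have hpos2 : 0 < 2 * v * w * (dv ^ 2 * w ^ 2 + dw ^ 2 * v ^ 2) :=
      mul_pos (by positivity) hq
    have hlt : (dv + dw) ^ 2 * (v ^ 2 * w ^ 2)
        < (dv ^ 2 * w ^ 2 + dw ^ 2 * v ^ 2) * (v + w) ^ 2 := by linarith
    have heq2 : dv ^ 2 / v ^ 2 + dw ^ 2 / w ^ 2 - (dv + dw) ^ 2 / (v + w) ^ 2
        = ((dv ^ 2 * w ^ 2 + dw ^ 2 * v ^ 2) * (v + w) ^ 2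
          - (dv + dw) ^ 2 * (v ^ 2 * w ^ 2)) / (v ^ 2 * w ^ 2 * (v + w) ^ 2) := by
      field_simp
    rw [heq2]
    exact div_pos (by linarith) (by positivity)

/-- The grand canonical entropy `f(β,μ) = log(1/(μ+β) + 1/(μ-β))` is strictly convex
on the open cone `A = {(β,μ) : μ > 0, |β| < μ}`. -/
theorem grand_canonical_entropy_strictConvexOn :
    StrictConvexOn ℝ {p : ℝ × ℝ | 0 < p.2 ∧ |p.1| < p.2}
      (fun p : ℝ × ℝ => Real.log (1/(p.2 + p.1) + 1/(p.2 - p.1))) := by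
  constructor
  · intro p hp q hq a b ha hb hab
    obtain ⟨hp2, hp1⟩ := hp
    obtain ⟨hq2, hq1⟩ := hq
    rw [abs_lt] at hp1 hq1
    have comb : ∀ u v U V : ℝ, u < U → v < V → a * u + b * v < a * U + b * V := by
      intro u v U V h1 h2
      rcases eq_or_lt_of_le ha with h | h
      · have hb1 : b = 1 := by linarith
        rw [← h, hb1]; simpa using h2
      · nlinarith [mul_pos h (sub_pos.2 h1), mul_nonneg hb (sub_nonneg.2 h2.le)]
    constructor
    · simp only [Prod.snd_add, Prod.smul_snd, smul_eq_mul, Set.mem_setOf_eq]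
      have := comb 0 0 p.2 q.2 hp2 hq2
      simpa using this
    · simp only [Prod.fst_add, Prod.snd_add, Prod.smul_fst, Prod.smul_snd, smul_eq_mul, abs_lt]
      constructor
      · have := comb (-p.2) (-q.2) p.1 q.1 hp1.1 hq1.1
        nlinarith [this]
      · exact comb p.1 q.1 p.2 q.2 hp1.2 hq1.2
  · intro x hx y hy hxy a b ha hb hab
    obtain ⟨hx2, hx1⟩ := hx
    obtain ⟨hy2, hy1⟩ := hy
    rw [abs_lt] at hx1 hy1
    obtain ⟨v0, hv0def⟩ : ∃ v0 : ℝ, v0 = x.2 + x.1 := ⟨_, rfl⟩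
    obtain ⟨w0, hw0def⟩ : ∃ w0 : ℝ, w0 = x.2 - x.1 := ⟨_, rfl⟩
    obtain ⟨dv, hdvdef⟩ : ∃ dv : ℝ, dv = (y.2 + y.1) - v0 := ⟨_, rfl⟩
    obtain ⟨dw, hdwdef⟩ : ∃ dw : ℝ, dw = (y.2 - y.1) - w0 := ⟨_, rfl⟩
    have hv0 : 0 < v0 := by rw [hv0def]; linarith
    have hw0 : 0 < w0 := by rw [hw0def]; linarith
    have hv1 : 0 < v0 + dv := by rw [hdvdef]; linarith
    have hw1 : 0 < w0 + dw := by rw [hdwdef]; linarith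
    have hvt : ∀ t ∈ Icc (0:ℝ) 1, 0 < v0 + t * dv := by
      intro t ht
      have h1 : v0 + t * dv = (1 - t) * v0 + t * (v0 + dv) := by ring
      rcases eq_or_lt_of_le ht.1 with h | h
      · rw [← h]; simpa using hv0
      · rw [h1]
        have := mul_nonneg (by linarith [ht.2] : (0:ℝ) ≤ 1 - t) hv0.le
        have := mul_pos h hv1
        linarith
    have hwt : ∀ t ∈ Icc (0:ℝ) 1, 0 < w0 + t * dw := by
      intro t ht
      have h1 : w0 + t * dw = (1 - t) * w0 + t * (w0 + dw) := by ring
      rcases eq_or_lt_of_le ht.1 with h | h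
      · rw [← h]; simpa using hw0
      · rw [h1]
        have := mul_nonneg (by linarith [ht.2] : (0:ℝ) ≤ 1 - t) hw0.le
        have := mul_pos h hw1
        linarith
    have hne : 0 < dv ^ 2 + dw ^ 2 := by
      by_contra h
      push_neg at h
      have hdv : dv = 0 := by nlinarith [sq_nonneg dv, sq_nonneg dw]
      have hdw : dw = 0 := by nlinarith [sq_nonneg dv, sq_nonneg dw]
      apply hxy
      rw [hdvdef, hv0def] at hdv
      rw [hdwdef, hw0def] at hdw
      exact Prod.ext (by linarith) (by linarith)
    have hsc := seg_strictConvex v0 w0 dv dw hvt hwt hne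
    have h0 : (0:ℝ) ∈ Icc (0:ℝ) 1 := by norm_num
    have h1 : (1:ℝ) ∈ Icc (0:ℝ) 1 := by norm_num
    have hmain := hsc.2 h0 h1 (by norm_num) ha hb hab
    simp only [smul_eq_mul, mul_zero, mul_one, zero_add] at hmain
    have hψ0 : Real.log ((v0 + w0) + 0 * (dv + dw)) - Real.log (v0 + 0 * dv)
        - Real.log (w0 + 0 * dw)
        = Real.log (1 / (x.2 + x.1) + 1 / (x.2 - x.1)) := by
      rw [logform _ _ (by linarith) (by linarith)]
      rw [hv0def, hw0def]
      norm_num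
    have hψ1 : Real.log ((v0 + w0) + 1 * (dv + dw)) - Real.log (v0 + 1 * dv)
        - Real.log (w0 + 1 * dw)
        = Real.log (1 / (y.2 + y.1) + 1 / (y.2 - y.1)) := by
      rw [logform _ _ (by linarith) (by linarith)]
      rw [hdvdef, hdwdef, hv0def, hw0def]
      ring_nf
    have hψb : Real.log ((v0 + w0) + b * (dv + dw)) - Real.log (v0 + b * dv)
        - Real.log (w0 + b * dw)
        = Real.log (1 / ((a • x + b • y).2 + (a • x + b • y).1)
          + 1 / ((a • x + b • y).2 - (a • x + b • y).1)) := by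
      have hb1 : a = 1 - b := by linarith
      have hbmem : b ∈ Icc (0:ℝ) 1 := ⟨hb.le, by linarith⟩
      have e2 : (a • x + b • y).2 + (a • x + b • y).1 = v0 + b * dv := by
        simp only [Prod.snd_add, Prod.fst_add, Prod.smul_snd, Prod.smul_fst, smul_eq_mul,
          hv0def, hdvdef, hb1]
        ring
      have e3 : (a • x + b • y).2 - (a • x + b • y).1 = w0 + b * dw := by
        simp only [Prod.snd_add, Prod.fst_add, Prod.smul_snd, Prod.smul_fst, smul_eq_mul,
          hw0def, hdwdef, hb1]
        ring
      rw [e2, e3, logform _ _ (hvt b hbmem) (hwt b hbmem)]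
      congr 1
      ring
    simp only [smul_eq_mul]
    rw [← hψ0, ← hψ1]
    rw [show Real.log (1 / ((a • x + b • y).2 + (a • x + b • y).1)
          + 1 / ((a • x + b • y).2 - (a • x + b • y).1))
        = Real.log ((v0 + w0) + b * (dv + dw)) - Real.log (v0 + b * dv)
          - Real.log (w0 + b * dw) from hψb.symm]
    exact hmain
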